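/- Let k > 0, let γ = (k+1)^{1/k} (so γ > 1), and let ℓ be a natural number. Define P̄(ṽ) = (ṽ^k − γ^{−k(ℓ+1)}) · (ṽ/γ) + (γ^{−kℓ} − ṽ^k) · ṽ. Then for every ṽ ∈ [γ^{−(ℓ+1)}, γ^{−ℓ}], P̄(ṽ) ≥ (γ^{−kℓ} − γ^{−k(ℓ+1)}) · γ^{−(ℓ+1)}, and P̄ takes exactly this value at both endpoints ṽ = γ^{−(ℓ+1)} and ṽ = γ^{−ℓ}. (This is the key step of Proposition 4: splitting the greedy segment S_ℓ = [γ^{−(ℓ+1)}, γ^{−ℓ}] into two sub-segments at any interior point ṽ cannot lower the mass-weighted average price below that achieved by the greedy segmentation.) -/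

import Mathlib

/-- Key step of Proposition 4: splitting the greedy segment
`S_ℓ = [γ^{-(ℓ+1)}, γ^{-ℓ}]` (where `γ = (k+1)^{1/k} > 1`) at any point `ṽ`
yields mass-weighted average price
`P̄(ṽ) = (ṽ^k - γ^{-k(ℓ+1)}) (ṽ/γ) + (γ^{-kℓ} - ṽ^k) ṽ`
that is at least the greedy value `(γ^{-kℓ} - γ^{-k(ℓ+1)}) γ^{-(ℓ+1)}`,
with equality at both endpoints of the segment. -/
theorem stmt_8 (k : ℝ) (hk : 0 < k) (γ : ℝ) (hγ : γ = (k + 1) ^ (1 / k))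
    (hγ1 : 1 < γ) (ℓ : ℕ) (P : ℝ → ℝ)
    (hP : ∀ vt : ℝ, P vt = (vt ^ k - γ ^ (-(k * ((ℓ : ℝ) + 1)))) * (vt / γ) +
      (γ ^ (-(k * (ℓ : ℝ))) - vt ^ k) * vt) :
    (∀ vt ∈ Set.Icc (γ ^ (-((ℓ : ℝ) + 1))) (γ ^ (-(ℓ : ℝ))),
      P vt ≥ (γ ^ (-(k * (ℓ : ℝ))) - γ ^ (-(k * ((ℓ : ℝ) + 1)))) * γ ^ (-((ℓ : ℝ) + 1))) ∧
    P (γ ^ (-((ℓ : ℝ) + 1))) =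
      (γ ^ (-(k * (ℓ : ℝ))) - γ ^ (-(k * ((ℓ : ℝ) + 1)))) * γ ^ (-((ℓ : ℝ) + 1)) ∧
    P (γ ^ (-(ℓ : ℝ))) =
      (γ ^ (-(k * (ℓ : ℝ))) - γ ^ (-(k * ((ℓ : ℝ) + 1)))) * γ ^ (-((ℓ : ℝ) + 1)) := by
  have hγ0 : (0 : ℝ) < γ := lt_trans one_pos hγ1
  set a : ℝ := γ ^ (-((ℓ : ℝ) + 1)) with ha_def
  set b : ℝ := γ ^ (-(ℓ : ℝ)) with hb_def
  set A : ℝ := γ ^ (-(k * ((ℓ : ℝ) + 1))) with hA_def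
  set B : ℝ := γ ^ (-(k * (ℓ : ℝ))) with hB_def
  have ha0 : 0 < a := Real.rpow_pos_of_pos hγ0 _
  have hb0 : 0 < b := Real.rpow_pos_of_pos hγ0 _
  have hab : a ≤ b :=
    Real.rpow_le_rpow_of_exponent_le hγ1.le (by push_cast; linarith)
  have hak : a ^ k = A := by
    rw [ha_def, hA_def, ← Real.rpow_mul hγ0.le]
    ring_nf
  have hbk : b ^ k = B := by
    rw [hb_def, hB_def, ← Real.rpow_mul hγ0.le]
    ring_nf
  have hba : b / γ = a := by
    rw [hb_def, ha_def, eq_comm, eq_div_iff (ne_of_gt hγ0)]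
    nth_rewrite 2 [← Real.rpow_one γ]
    rw [← Real.rpow_add hγ0]
    ring_nf
  have hPa : P a = (B - A) * a := by
    rw [hP, hak]; ring
  have hPb : P b = (B - A) * a := by
    rw [hP, hbk, hba]; ring
  -- rewrite P as affine minus convex for positive inputs
  set c1 : ℝ := B - A / γ with hc1
  set c2 : ℝ := 1 - 1 / γ with hc2
  have hc2nn : 0 ≤ c2 := by
    rw [hc2]
    have : 1 / γ ≤ 1 := by
      rw [div_le_one hγ0]; linarith
    linarith
  have hPform : ∀ v : ℝ, 0 < v → P v = c1 * v + -(c2 * v ^ (k + 1)) := by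
    intro v hv
    rw [hP, Real.rpow_add hv, Real.rpow_one, hc1, hc2]
    field_simp
    ring
  have hconc : ConcaveOn ℝ (Set.Ici (0:ℝ))
      (fun v : ℝ => c1 * v + -(c2 * v ^ (k + 1))) := by
    have hlin : ConcaveOn ℝ (Set.Ici (0:ℝ)) (fun v : ℝ => c1 * v) := by
      refine ⟨convex_Ici 0, fun x _ y _ p q hp hq hpq => ?_⟩
      simp only [smul_eq_mul]
      apply le_of_eq; ring
    have hconv : ConvexOn ℝ (Set.Ici (0:ℝ)) (fun v : ℝ => c2 * v ^ (k + 1)) := by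
      have := (convexOn_rpow (p := k + 1) (by linarith)).smul hc2nn
      simpa [smul_eq_mul] using this
    exact hlin.add hconv.neg
  have key : ∀ vt ∈ Set.Icc a b, P vt ≥ (B - A) * a := by
    intro vt hvt
    have hvt0 : 0 < vt := lt_of_lt_of_le ha0 hvt.1
    have hseg : vt ∈ segment ℝ a b := by
      rw [segment_eq_Icc hab]; exact hvt
    have := hconc.ge_on_segment (Set.mem_Ici.2 ha0.le) (Set.mem_Ici.2 hb0.le) hseg
    rw [hPform vt hvt0]
    calc (B - A) * a = min (c1 * a + -(c2 * a ^ (k + 1))) (c1 * b + -(c2 * b ^ (k + 1))) := by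
          rw [← hPform a ha0, ← hPform b hb0, hPa, hPb, min_self]
      _ ≤ _ := this
  exact ⟨key, hPa, hPb⟩
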